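/- Let n ≥ 2, 0 < p < 1, ω = e^{2πi/n}, and for j ∈ {0,1,...,n−1} let λ_j = (1−p)ω^j/(1 − p·ω^j). Then |λ_j| = (1−p)/√(1 + p² − 2p·cos(2πj/n)) for every j, λ_0 = 1, and |λ_j| ≤ |λ₁| < 1 for all j ∈ {1,...,n−1}. -/

import Mathlib

open Complex

/-- For `ω = e^{2πi/n}` and `λ_j = (1−p)ω^j/(1 − p·ω^j)`:
`|λ_j| = (1−p)/√(1+p²−2p·cos(2πj/n))` for every `j ∈ {0,…,n−1}`, `λ_0 = 1`, and
`|λ_j| ≤ |λ_1| < 1` for `1 ≤ j ≤ n−1`. -/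
theorem skip_ring_eigenvalue_magnitudes
    (n : ℕ) (hn : 2 ≤ n) (p : ℝ) (hp0 : 0 < p) (hp1 : p < 1)
    (ω : ℂ) (hω : ω = Complex.exp (2 * Real.pi * Complex.I / n))
    (lam : ℕ → ℂ)
    (hlam : ∀ j : ℕ, lam j = (1 - (p : ℂ)) * ω ^ j / (1 - (p : ℂ) * ω ^ j)) :
    (∀ j : ℕ, j < n →
      ‖lam j‖
        = (1 - p) / Real.sqrt (1 + p ^ 2 - 2 * p * Real.cos (2 * Real.pi * j / n))) ∧
    lam 0 = 1 ∧
    (∀ j : ℕ, 1 ≤ j → j ≤ n - 1 → ‖lam j‖ ≤ ‖lam 1‖) ∧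
    ‖lam 1‖ < 1 := by
  have hn0 : (0:ℝ) < n := by positivity
  have hπ := Real.pi_pos
  -- ω^j as an exponential
  have hωj : ∀ j : ℕ, ω ^ j = Complex.exp (((2 * Real.pi * j / n : ℝ) : ℂ) * Complex.I) := by
    intro j
    rw [hω, ← Complex.exp_nat_mul]
    congr 1
    push_cast
    ring
  -- magnitude of the denominator
  have habs_denom : ∀ j : ℕ, ‖1 - (p : ℂ) * ω ^ j‖
      = Real.sqrt (1 + p ^ 2 - 2 * p * Real.cos (2 * Real.pi * j / n)) := by
    intro j
    rw [Complex.norm_def]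
    congr 1
    have hre : (ω ^ j).re = Real.cos (2 * Real.pi * j / n) := by
      rw [hωj j]; exact Complex.exp_ofReal_mul_I_re _
    have him : (ω ^ j).im = Real.sin (2 * Real.pi * j / n) := by
      rw [hωj j]; exact Complex.exp_ofReal_mul_I_im _
    have hpyth := Real.sin_sq_add_cos_sq (2 * Real.pi * j / n)
    simp only [Complex.normSq_apply, Complex.sub_re, Complex.sub_im, Complex.mul_re,
      Complex.mul_im, Complex.one_re, Complex.one_im, Complex.ofReal_re, Complex.ofReal_im,
      hre, him]
    nlinarith [hpyth]
  -- denominators under the square roots are positive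
  have hdpos : ∀ x : ℝ, x ≤ 1 → 0 < 1 + p ^ 2 - 2 * p * x := by
    intro x hx; nlinarith
  have hcos_le_one : ∀ j : ℕ, Real.cos (2 * Real.pi * j / n) ≤ 1 := fun j => Real.cos_le_one _
  -- the magnitude formula holds for all j
  have hform : ∀ j : ℕ, ‖lam j‖
      = (1 - p) / Real.sqrt (1 + p ^ 2 - 2 * p * Real.cos (2 * Real.pi * j / n)) := by
    intro j
    rw [hlam j, norm_div, norm_mul, habs_denom j]
    have h1 : (1 - (p : ℂ)) = ((1 - p : ℝ) : ℂ) := by push_cast; ring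
    have h2 : ‖ω ^ j‖ = 1 := by
      rw [hωj j]; exact Complex.norm_exp_ofReal_mul_I _
    rw [h1, h2, Complex.norm_real, Real.norm_eq_abs, _root_.abs_of_nonneg (by linarith : (0:ℝ) ≤ 1 - p), mul_one]
  refine ⟨fun j _ => hform j, ?_, ?_, ?_⟩
  · -- lam 0 = 1
    have hne : (1 : ℂ) - (p : ℂ) ≠ 0 :=
      sub_ne_zero.mpr (by exact_mod_cast hp1.ne')
    rw [hlam 0]
    simp only [pow_zero, mul_one]
    exact div_self hne
  · -- monotonicity
    intro j hj1 hjn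
    have hjlt : j + 1 ≤ n := by omega
    have hcos : Real.cos (2 * Real.pi * j / n) ≤ Real.cos (2 * Real.pi * 1 / n) := by
      have ha0 : 0 < 2 * Real.pi / n := by positivity
      have haπ : 2 * Real.pi / n ≤ Real.pi := by
        rw [div_le_iff₀ hn0]
        have : (2:ℝ) ≤ n := by exact_mod_cast hn
        nlinarith
      have hj1' : (1:ℝ) ≤ j := by exact_mod_cast hj1
      have hja : 2 * Real.pi / n ≤ 2 * Real.pi * j / n := by
        apply div_le_div_of_nonneg_right ?_ hn0.le
        nlinarith
      rcases le_or_gt (2 * Real.pi * j / n) Real.pi with hle | hgt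
      · have := Real.cos_le_cos_of_nonneg_of_le_pi (le_of_lt ha0) hle hja
        simpa [mul_one] using this
      · have hsub : Real.cos (2 * Real.pi * j / n)
            = Real.cos (2 * Real.pi - 2 * Real.pi * j / n) := by
          rw [Real.cos_two_pi_sub]
        rw [hsub]
        have hle2 : 2 * Real.pi - 2 * Real.pi * j / n ≤ Real.pi := by linarith
        have hge2 : 2 * Real.pi / n ≤ 2 * Real.pi - 2 * Real.pi * j / n := by
          rw [le_sub_iff_add_le, ← add_div, div_le_iff₀ hn0]
          have hjn' : (j:ℝ) + 1 ≤ n := by exact_mod_cast hjlt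
          nlinarith
        have := Real.cos_le_cos_of_nonneg_of_le_pi (le_of_lt ha0) hle2 hge2
        simpa [mul_one] using this
    rw [hform j, hform 1]
    push_cast
    have hd1 : 0 < 1 + p ^ 2 - 2 * p * Real.cos (2 * Real.pi * 1 / n) :=
      hdpos _ (by simpa using hcos_le_one 1)
    apply div_le_div_of_nonneg_left (by linarith) (Real.sqrt_pos.mpr hd1)
    apply Real.sqrt_le_sqrt
    nlinarith
  · -- |lam 1| < 1
    rw [hform 1]
    have hc1 : Real.cos (2 * Real.pi * 1 / n) < 1 := by
      have ha0 : 0 < 2 * Real.pi / n := by positivity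
      have haπ : 2 * Real.pi / n ≤ Real.pi := by
        rw [div_le_iff₀ hn0]
        have : (2:ℝ) ≤ n := by exact_mod_cast hn
        nlinarith
      have := Real.cos_lt_cos_of_nonneg_of_le_pi le_rfl haπ ha0
      simpa [mul_one] using this
    have hd1 : 0 < 1 + p ^ 2 - 2 * p * Real.cos (2 * Real.pi * 1 / n) :=
      hdpos _ (by simpa using hcos_le_one 1)
    push_cast
    rw [div_lt_one (Real.sqrt_pos.mpr hd1)]
    rw [show (1 - p : ℝ) = Real.sqrt ((1 - p) ^ 2) from
      (Real.sqrt_sq (by linarith)).symm]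
    apply Real.sqrt_lt_sqrt (by positivity)
    nlinarith
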